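/- In the concrete 2-dimensional representation of U_q gl(1|1), the super universal R-matrix ř = q^{−(C⊗N + N⊗C)}(1⊗1 + (1−q²) q^Nη ⊗ q^{−N}η⁺) evaluates (via ρ⊗ρ) to an invertible 4×4 matrix R̃ that satisfies the graded quantum Yang-Baxter equation R̃₁₂R̃₁₃R̃₂₃ = R̃₂₃R̃₁₃R̃₁₂, where the embeddings R̃₁₃ etc. use graded tensor legs (equivalently: P_s R̃ satisfies the braid relation, with P_s the super-flip P_s(e_i⊗e_j) = (−1)^{deg(i)deg(j)} e_j⊗e_i, deg(1)=0, deg(2)=1). -/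

import Mathlib

open Matrix Kronecker

noncomputable section

def ρη : Matrix (Fin 2) (Fin 2) ℂ := !![0, 1; 0, 0]
def ρηp : Matrix (Fin 2) (Fin 2) ℂ := !![0, 0; 1, 0]
def ρqN (q : ℂ) : Matrix (Fin 2) (Fin 2) ℂ := !![1, 0; 0, q]
/-- The grading operator `diag(1,−1)` of `ℂ^{1|1}` (Koszul-sign twist for a graded
tensor leg whose second factor is odd). -/
def gr : Matrix (Fin 2) (Fin 2) ℂ := !![1, 0; 0, -1]

/-- `R̃ = (ρ⊗ρ)(ř)` where `ř = q^{−(C⊗N+N⊗C)}(1⊗1 + (1−q²) q^N η ⊗ q^{−N}η⁺)`: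
the prefactor is `diag(1,q⁻¹,q⁻¹,q⁻²) = ρ(q^{−N}) ⊗ ρ(q^{−N})` (since `C` acts as 1),
and the odd-odd term carries the Koszul sign twist `gr` on the first leg. -/
def Rt (q : ℂ) : Matrix (Fin 2 × Fin 2) (Fin 2 × Fin 2) ℂ :=
  ((ρqN q)⁻¹ ⊗ₖ (ρqN q)⁻¹) *
    (1 + (1 - q ^ 2) • ((ρqN q * ρη * gr) ⊗ₖ ((ρqN q)⁻¹ * ρηp)))

/-- The super-flip `P_s(e_i⊗e_j) = (−1)^{deg i · deg j} e_j⊗e_i`. -/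
def Ps : Matrix (Fin 2 × Fin 2) (Fin 2 × Fin 2) ℂ :=
  Matrix.of fun p p' =>
    if p.1 = p'.2 ∧ p.2 = p'.1 then (if p = (1, 1) then -1 else 1) else 0

/-- `Ř_s = P_s · R̃`. -/
def Rs (q : ℂ) : Matrix (Fin 2 × Fin 2) (Fin 2 × Fin 2) ℂ := Ps * Rt q

/-- `Ř_s ⊗ I₂`. -/
def RsI (q : ℂ) : Matrix (Fin 2 × Fin 2 × Fin 2) (Fin 2 × Fin 2 × Fin 2) ℂ :=
  Matrix.of fun x y => Rs q (x.1, x.2.1) (y.1, y.2.1) * (if x.2.2 = y.2.2 then 1 else 0)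

/-- `I₂ ⊗ Ř_s`. -/
def IRs (q : ℂ) : Matrix (Fin 2 × Fin 2 × Fin 2) (Fin 2 × Fin 2 × Fin 2) ℂ :=
  Matrix.of fun x y => Rs q x.2 y.2 * (if x.1 = y.1 then 1 else 0)

/- ### Auxiliary explicit computations -/

lemma ρqN_inv (q : ℂ) (hq : q ≠ 0) : (ρqN q)⁻¹ = !![1, 0; 0, q⁻¹] := by
  apply inv_eq_right_inv
  rw [ρqN, Matrix.mul_fin_two]
  simp [Matrix.one_fin_two, mul_inv_cancel₀ hq]

/-- Explicit form of `R̃`. -/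
def Rtex (q : ℂ) : Matrix (Fin 2 × Fin 2) (Fin 2 × Fin 2) ℂ :=
  Matrix.of fun p p' =>
    if p = (0,0) ∧ p' = (0,0) then 1
    else if p = (0,1) ∧ p' = (0,1) then q⁻¹
    else if p = (0,1) ∧ p' = (1,0) then 1 - q⁻¹^2
    else if p = (1,0) ∧ p' = (1,0) then q⁻¹
    else if p = (1,1) ∧ p' = (1,1) then q⁻¹^2
    else 0

set_option maxHeartbeats 1000000 in
lemma Rt_eq (q : ℂ) (hq : q ≠ 0) : Rt q = Rtex q := by
  have hA : ρqN q * ρη * gr = !![0, -1; 0, 0] := by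
    rw [ρqN, ρη, gr, Matrix.mul_fin_two, Matrix.mul_fin_two]; norm_num
  have hB : (ρqN q)⁻¹ * ρηp = !![0, 0; q⁻¹, 0] := by
    rw [ρqN_inv q hq, ρηp, Matrix.mul_fin_two]; norm_num
  rw [Rt, hA, hB, ρqN_inv q hq]
  ext ⟨i, j⟩ ⟨k, l⟩
  fin_cases i <;> fin_cases j <;> fin_cases k <;> fin_cases l <;>
    simp [Rtex, Matrix.mul_apply, Matrix.kroneckerMap_apply,
      Fintype.sum_prod_type, Fin.sum_univ_two, Matrix.one_apply, Prod.ext_iff] <;>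
    (try field_simp) <;> (try ring_nf) <;> tauto

/-- Explicit inverse of `R̃`. -/
def Sex (q : ℂ) : Matrix (Fin 2 × Fin 2) (Fin 2 × Fin 2) ℂ :=
  Matrix.of fun p p' =>
    if p = (0,0) ∧ p' = (0,0) then 1
    else if p = (0,1) ∧ p' = (0,1) then q
    else if p = (0,1) ∧ p' = (1,0) then 1 - q^2
    else if p = (1,0) ∧ p' = (1,0) then q
    else if p = (1,1) ∧ p' = (1,1) then q^2
    else 0

/-- Explicit form of `Ř_s`. -/
def Rsex (q : ℂ) : Matrix (Fin 2 × Fin 2) (Fin 2 × Fin 2) ℂ :=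
  Matrix.of fun p p' =>
    if p = (0,0) ∧ p' = (0,0) then 1
    else if p = (0,1) ∧ p' = (1,0) then q⁻¹
    else if p = (1,0) ∧ p' = (0,1) then q⁻¹
    else if p = (1,0) ∧ p' = (1,0) then 1 - q⁻¹^2
    else if p = (1,1) ∧ p' = (1,1) then -q⁻¹^2
    else 0

set_option maxHeartbeats 1000000 in
lemma Rs_eq (q : ℂ) (hq : q ≠ 0) : Rs q = Rsex q := by
  rw [Rs, Rt_eq q hq]
  ext ⟨i, j⟩ ⟨k, l⟩
  fin_cases i <;> fin_cases j <;> fin_cases k <;> fin_cases l <;>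
    simp [Ps, Rtex, Rsex, Matrix.mul_apply, Fintype.sum_prod_type, Fin.sum_univ_two,
      Prod.ext_iff]

set_option maxHeartbeats 4000000 in
/-- The super universal R-matrix of `U_q gl(1|1)` evaluates in the 2-dimensional
representation to an invertible matrix `R̃` such that `Ř_s = P_s·R̃` satisfies the
braid relation (equivalently, `R̃` satisfies the graded quantum Yang–Baxter
equation). -/
theorem super_R_braid (q : ℂ) (hq : q ≠ 0) (hq2 : q ^ 2 ≠ 1) :
    (∃ S : Matrix (Fin 2 × Fin 2) (Fin 2 × Fin 2) ℂ, Rt q * S = 1 ∧ S * Rt q = 1) ∧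
    RsI q * IRs q * RsI q = IRs q * RsI q * IRs q := by
  constructor
  · refine ⟨Sex q, ?_, ?_⟩ <;>
    · rw [Rt_eq q hq]
      ext ⟨i, j⟩ ⟨k, l⟩
      fin_cases i <;> fin_cases j <;> fin_cases k <;> fin_cases l <;>
        simp [Rtex, Sex, Matrix.mul_apply, Fintype.sum_prod_type, Fin.sum_univ_two,
          Matrix.one_apply, Prod.ext_iff] <;>
        field_simp <;> ring
  · have h := Rs_eq q hq
    ext ⟨i, j, k⟩ ⟨a, b, c⟩
    fin_cases i <;> fin_cases j <;> fin_cases k <;> fin_cases a <;> fin_cases b <;>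
      fin_cases c <;>
      simp [RsI, IRs, h, Rsex, Matrix.mul_apply, Fintype.sum_prod_type, Fin.sum_univ_two,
        Prod.ext_iff] <;>
      ring
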